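/- Let (X,d) be a nonempty complete metric space, let J be a nonempty finite index set, let 0 ≤ c < 1, and suppose that for each j ∈ J we are given a nonempty finite family of pairs (f, j') where f : X → X is Lipschitz with constant c and j' ∈ J. Then there exists a unique family (K_j)_{j ∈ J} of nonempty compact subsets of X such that for every j ∈ J, K_j = ⋃_{(f, j') in the family for j} f(K_{j'}). -/

import Mathlib

open EMetric Metric Set ENNReal NNReal TopologicalSpace

private lemma infEdist_image_le' {X : Type*} [MetricSpace X] {K : ℝ≥0} {g : X → X}
    (hg : LipschitzWith K g) (x : X) {t : Set X} (ht : t.Nonempty) :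
    infEdist (g x) (g '' t) ≤ K * infEdist x t := by
  have h1 : infEdist (g x) (g '' t) ≤ ⨅ y : t, edist (g x) (g y) :=
    le_iInf fun y => infEdist_le_edist_of_mem (mem_image_of_mem _ y.2)
  have h2 : (⨅ y : t, edist (g x) (g y)) ≤ ⨅ y : t, (K : ℝ≥0∞) * edist x y :=
    iInf_mono fun y => hg.edist_le_mul x y
  have h3 : (⨅ y : t, (K : ℝ≥0∞) * edist x y) = K * ⨅ y : t, edist x y := by
    rw [ENNReal.mul_iInf' (by simp) (fun _ => ht.to_subtype)]
  have h4 : (⨅ y : t, edist x y) = infEdist x t := by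
    rw [infEdist, infEDist, iInf_subtype']
  calc infEdist (g x) (g '' t) ≤ ⨅ y : t, edist (g x) (g y) := h1
    _ ≤ ⨅ y : t, (K : ℝ≥0∞) * edist x y := h2
    _ = K * ⨅ y : t, edist x y := h3
    _ = K * infEdist x t := by rw [h4]

private lemma hausdorffEdist_image_le' {X : Type*} [MetricSpace X] {K : ℝ≥0} {g : X → X}
    (hg : LipschitzWith K g) {s t : Set X} (hs : s.Nonempty) (ht : t.Nonempty) :
    hausdorffEdist (g '' s) (g '' t) ≤ K * hausdorffEdist s t := by
  apply hausdorffEdist_le_of_infEdist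
  · rintro _ ⟨x, hx, rfl⟩
    exact (infEdist_image_le' hg x ht).trans
      (mul_le_mul_right (infEdist_le_hausdorffEdist_of_mem hx) _)
  · rintro _ ⟨x, hx, rfl⟩
    refine (infEdist_image_le' hg x hs).trans (mul_le_mul_right ?_ _)
    rw [hausdorffEdist, hausdorffEdist_comm]
    exact infEdist_le_hausdorffEdist_of_mem hx

private lemma hausdorffEdist_iUnion_le' {X : Type*} [MetricSpace X] {ι : Type*}
    {s t : ι → Set X} {r : ℝ≥0∞} (h : ∀ i, hausdorffEdist (s i) (t i) ≤ r) :
    hausdorffEdist (⋃ i, s i) (⋃ i, t i) ≤ r := by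
  apply hausdorffEdist_le_of_infEdist
  · rintro x hx
    obtain ⟨i, hi⟩ := mem_iUnion.1 hx
    exact le_trans (infEdist_anti (subset_iUnion t i))
      ((infEdist_le_hausdorffEdist_of_mem hi).trans (h i))
  · rintro x hx
    obtain ⟨i, hi⟩ := mem_iUnion.1 hx
    refine le_trans (infEdist_anti (subset_iUnion s i)) ?_
    refine (infEdist_le_hausdorffEdist_of_mem hi).trans ?_
    rw [hausdorffEdist_comm]
    exact h i

/-- Graph-directed Hutchinson theorem: given a nonempty complete metric space `X`,
a nonempty finite index set `J`, a constant `0 ≤ c < 1`, and for each `j ∈ J` a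
nonempty finite family of pairs `(f, j')` where `f : X → X` is Lipschitz with
constant `c` and `j' ∈ J`, there is a unique family `(K_j)_{j ∈ J}` of nonempty
compact subsets of `X` with `K_j = ⋃_{(f,j')} f(K_{j'})` for every `j`. -/
theorem graph_directed_hutchinson {X : Type*} [MetricSpace X] [CompleteSpace X]
    [Nonempty X] {J : Type*} [Finite J] [Nonempty J]
    (c : ℝ) (hc0 : 0 ≤ c) (hc1 : c < 1)
    (I : J → Type*) [∀ j, Finite (I j)] [∀ j, Nonempty (I j)]
    (f : ∀ j, I j → X → X) (t : ∀ j, I j → J)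
    (hf : ∀ j (i : I j) (x y : X), dist (f j i x) (f j i y) ≤ c * dist x y) :
    ∃! K : J → Set X,
      (∀ j, IsCompact (K j) ∧ (K j).Nonempty) ∧
      (∀ j, K j = ⋃ i : I j, f j i '' K (t j i)) := by
  haveI := Fintype.ofFinite J
  set cn : ℝ≥0 := ⟨c, hc0⟩ with hcn
  have hcn1 : cn < 1 := by exact_mod_cast hc1
  have hlip : ∀ j (i : I j), LipschitzWith cn (f j i) := fun j i =>
    LipschitzWith.of_dist_le_mul fun x y => hf j i x y
  -- the map on tuples of nonempty compact sets
  set F : (J → NonemptyCompacts X) → (J → NonemptyCompacts X) := fun K j =>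
    ⟨⟨⋃ i : I j, f j i '' (K (t j i) : Set X),
      isCompact_iUnion fun i => ((K (t j i)).1.2.image (hlip j i).continuous)⟩,
      Set.nonempty_iUnion.2 ⟨Classical.arbitrary (I j),
        ((K (t j (Classical.arbitrary (I j)))).nonempty.image _)⟩⟩ with hF
  have hedist : ∀ s u : NonemptyCompacts X,
      edist s u = hausdorffEdist (s : Set X) (u : Set X) := fun _ _ => rfl
  have hcontr : ContractingWith cn F := by
    refine ⟨hcn1, fun K K' => ?_⟩
    refine edist_pi_le_iff.2 fun j => ?_
    rw [hedist]
    refine hausdorffEdist_iUnion_le' fun i => ?_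
    calc hausdorffEdist (f j i '' (K (t j i) : Set X)) (f j i '' (K' (t j i) : Set X))
        ≤ cn * hausdorffEdist (K (t j i) : Set X) (K' (t j i) : Set X) :=
          hausdorffEdist_image_le' (hlip j i) (K (t j i)).nonempty (K' (t j i)).nonempty
      _ = cn * edist (K (t j i)) (K' (t j i)) := rfl
      _ ≤ cn * edist K K' := mul_le_mul_right (edist_le_pi_edist K K' (t j i)) _
  haveI : Nonempty (NonemptyCompacts X) :=
    ⟨⟨⟨{Classical.arbitrary X}, isCompact_singleton⟩, Set.singleton_nonempty _⟩⟩
  obtain ⟨P, hP⟩ : ∃ P, Function.IsFixedPt F P :=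
    ⟨ContractingWith.fixedPoint F hcontr, hcontr.fixedPoint_isFixedPt⟩
  refine ⟨fun j => (P j : Set X), ⟨fun j => ⟨(P j).1.2, (P j).nonempty⟩, fun j => ?_⟩, ?_⟩
  · conv_lhs => rw [← hP]
    rfl
  · rintro K ⟨hK1, hK2⟩
    set Q : J → NonemptyCompacts X := fun j => ⟨⟨K j, (hK1 j).1⟩, (hK1 j).2⟩ with hQ
    have hQfix : Function.IsFixedPt F Q := by
      funext j
      apply NonemptyCompacts.ext
      exact (hK2 j).symm
    have : Q = P := hcontr.fixedPoint_unique' hQfix hP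
    funext j
    rw [← this]
    rfl
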